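/- Let C be an F_q-linear subspace of F_q^m × F_q^n × F_q^m of dimension m + k, let Ĉ be its twisted dual constraint code, and let y ∈ ℂ satisfy 1 + (q−1)y ≠ 0. Then in ℂ[[D]], the (0,0) entry of (I − D·Λ_Ĉ(1,y))⁻¹ equals (1/q^m) times the (0,0) entry of F_m · (I − D·((1+(q−1)y)^n/q^k)·Λ_C(1, (1−y)/(1+(q−1)y)))⁻¹ · F_m†, where 0 denotes the zero vector of F_q^m. (This expresses the total weight generating function W_{C^⊥}(y,D) of the dual convolutional code in terms of the weight adjacency matrix of C.) -/

import Mathlib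

/-!
STATEMENT 11: For a constraint code `C ⊆ F_q^m × F_q^n × F_q^m` of dimension
`m + k`, its twisted dual `Ĉ`, and `y ∈ ℂ` with `1 + (q−1)y ≠ 0`, in `ℂ[[D]]`
the `(0,0)` entry of `(I − D·Λ_Ĉ(1,y))⁻¹` equals `(1/q^m)` times the `(0,0)`
entry of `F_m · (I − D·((1+(q−1)y)^n/q^k)·Λ_C(1,(1−y)/(1+(q−1)y)))⁻¹ · F_m†`.
-/

open scoped Classical
open Matrix

noncomputable section

variable (p : ℕ) [Fact p.Prime] (F : Type) [Field F] [Fintype F] [Algebra (ZMod p) F]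

/-- Hamming weight of a vector. -/
def wt {n : ℕ} (v : Fin n → F) : ℕ := (Finset.univ.filter fun i => v i ≠ 0).card

/-- The twisted dual constraint code. -/
def twistedDual {m n : ℕ} (C : Set ((Fin m → F) × (Fin n → F) × (Fin m → F))) :
    Set ((Fin m → F) × (Fin n → F) × (Fin m → F)) :=
  {v | ∀ c ∈ C, (∑ i, v.1 i * c.1 i) + (∑ i, v.2.1 i * c.2.1 i)
      - (∑ i, v.2.2 i * c.2.2 i) = 0}

/-- The weight adjacency matrix `Λ_S(x,y)`. -/
def WAM {m n : ℕ} (S : Set ((Fin m → F) × (Fin n → F) × (Fin m → F)))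
    (x y : ℂ) : Matrix (Fin m → F) (Fin m → F) ℂ := fun w w' =>
  ∑ pv : Fin n → F, if (w, pv, w') ∈ S then x ^ (n - wt F pv) * y ^ wt F pv else 0

/-- The Fourier matrix `F_m` with `(a,b)` entry `ω^{tr(a·b)}`. -/
def FourierMat (m : ℕ) : Matrix (Fin m → F) (Fin m → F) ℂ := fun a b =>
  Complex.exp (2 * Real.pi * Complex.I / p) ^
    (Algebra.trace (ZMod p) F (∑ i, a i * b i)).val

/-- The matrix `I − D·M` over `ℂ[[D]]` associated with a complex matrix `M`. -/
def oneSubDM {m : ℕ} (M : Matrix (Fin m → F) (Fin m → F) ℂ) :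
    Matrix (Fin m → F) (Fin m → F) (PowerSeries ℂ) :=
  1 - (PowerSeries.X : PowerSeries ℂ) • M.map (@PowerSeries.C ℂ _)

set_option linter.unusedSectionVars false
set_option maxHeartbeats 1000000

namespace Aux11

def psi (x : F) : ℂ :=
  Complex.exp (2 * Real.pi * Complex.I / p) ^ (Algebra.trace (ZMod p) F x).val

variable {p F}

lemma hp0 : (p : ℕ) ≠ 0 := (Fact.out : p.Prime).ne_zero

lemma omega_prim : IsPrimitiveRoot (Complex.exp (2 * Real.pi * Complex.I / p)) p :=
  Complex.isPrimitiveRoot_exp p hp0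

lemma omega_pow_p : Complex.exp (2 * Real.pi * Complex.I / p) ^ (p : ℕ) = 1 :=
  (omega_prim (p := p)).pow_eq_one

lemma omega_pow_mod (j : ℕ) :
    Complex.exp (2 * Real.pi * Complex.I / p) ^ (j % p)
      = Complex.exp (2 * Real.pi * Complex.I / p) ^ j := by
  conv_rhs => rw [← Nat.div_add_mod j p]
  rw [pow_add, pow_mul, omega_pow_p, one_pow, one_mul]

lemma psi_zero : psi p F (0 : F) = 1 := by
  simp [psi]

lemma psi_add (a b : F) : psi p F (a + b) = psi p F a * psi p F b := by
  haveI : NeZero p := ⟨hp0⟩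
  unfold psi
  rw [map_add, ZMod.val_add, omega_pow_mod, pow_add]

lemma psi_sum {ι : Type*} (s : Finset ι) (f : ι → F) :
    psi p F (∑ i ∈ s, f i) = ∏ i ∈ s, psi p F (f i) := by
  classical
  induction s using Finset.cons_induction with
  | empty => simp [psi_zero]
  | cons i s hi ih => rw [Finset.sum_cons, Finset.prod_cons, psi_add, ih]

lemma psi_mul_neg (a : F) : psi p F a * psi p F (-a) = 1 := by
  rw [← psi_add, add_neg_cancel, psi_zero]

lemma psi_ne_zero (a : F) : psi p F a ≠ 0 :=
  pow_ne_zero _ (Complex.exp_ne_zero _)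

lemma psi_neg (a : F) : psi p F (-a) = (psi p F a)⁻¹ :=
  eq_inv_of_mul_eq_one_left (by rw [mul_comm] at *; exact psi_mul_neg a)

lemma conj_psi (a : F) : (starRingEnd ℂ) (psi p F a) = psi p F (-a) := by
  have hz : (starRingEnd ℂ) (2 * Real.pi * Complex.I / p) = -(2 * Real.pi * Complex.I / p) := by
    simp [map_div₀, Complex.conj_I, map_ofNat]
    ring
  rw [psi_neg]
  unfold psi
  rw [map_pow, ← Complex.exp_conj, hz, Complex.exp_neg, inv_pow]

lemma psi_tr_ne_one {x : F} (hx : Algebra.trace (ZMod p) F x ≠ 0) : psi p F x ≠ 1 := by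
  haveI : NeZero p := ⟨hp0⟩
  have hlt : (Algebra.trace (ZMod p) F x).val < p := ZMod.val_lt _
  have hpos : 0 < (Algebra.trace (ZMod p) F x).val :=
    Nat.pos_of_ne_zero fun h => hx (by rwa [← ZMod.val_eq_zero])
  exact (omega_prim (p := p)).pow_ne_one_of_pos_of_lt hpos.ne' hlt

/-- Character sum over a finite `F`-module: vanishes unless the functional is zero. -/
lemma sum_psi_linear {V : Type*} [AddCommGroup V] [Module F V] [Fintype V]
    (ℓ : V →ₗ[F] F) :
    ∑ x : V, psi p F (ℓ x) = if ℓ = 0 then (Fintype.card V : ℂ) else 0 := by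
  split_ifs with h
  · subst h; simp [psi_zero]
  · obtain ⟨x0, hx0⟩ : ∃ x0, ℓ x0 ≠ 0 := by
      by_contra hf
      push_neg at hf
      exact h (by ext x; simp [hf x])
    obtain ⟨t, ht⟩ : ∃ t : F, Algebra.trace (ZMod p) F t ≠ 0 := by
      by_contra hf
      push_neg at hf
      exact Algebra.trace_ne_zero (ZMod p) F (by ext x; simp [hf x])
    set x1 := (t / ℓ x0) • x0 with hx1
    have hℓx1 : ℓ x1 = t := by
      rw [hx1, ℓ.map_smul, smul_eq_mul, div_mul_cancel₀ _ hx0]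
    have hne : psi p F (ℓ x1) ≠ 1 := by rw [hℓx1]; exact psi_tr_ne_one ht
    have key : ∑ x : V, psi p F (ℓ x) = psi p F (ℓ x1) * ∑ x : V, psi p F (ℓ x) := by
      rw [Finset.mul_sum]
      rw [← Equiv.sum_comp (Equiv.addLeft x1) (fun x => psi p F (ℓ x))]
      refine Finset.sum_congr rfl fun x _ => ?_
      simp only [Equiv.coe_addLeft, map_add, psi_add]
    have h0 : (1 - psi p F (ℓ x1)) * ∑ x : V, psi p F (ℓ x) = 0 := by
      linear_combination key
    rcases mul_eq_zero.mp h0 with h1 | h2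
    · exact absurd (sub_eq_zero.mp h1).symm hne
    · exact h2

/-- The dot-product linear functional. -/
def dotL (F) [Field F] {r : ℕ} (d : Fin r → F) : (Fin r → F) →ₗ[F] F where
  toFun x := ∑ i, d i * x i
  map_add' x y := by simp [mul_add, Finset.sum_add_distrib]
  map_smul' a x := by simp [Finset.mul_sum, smul_eq_mul]; congr 1; ext i; ring

@[simp] lemma dotL_apply {r : ℕ} (d x : Fin r → F) : dotL F d x = ∑ i, d i * x i := rfl

lemma dotL_eq_zero_iff {r : ℕ} (d : Fin r → F) : dotL F d = 0 ↔ d = 0 := by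
  constructor
  · intro h
    funext j
    have := DFunLike.congr_fun h (Pi.single j 1)
    simpa [dotL_apply, Pi.single_apply, mul_ite, Finset.sum_ite_eq'] using this
  · rintro rfl; ext x; simp

lemma sum_psi_mul (a : F) :
    ∑ t : F, psi p F (a * t) = if a = 0 then (Fintype.card F : ℂ) else 0 := by
  have := sum_psi_linear (p := p) (V := F) (LinearMap.mulLeft F a)
  simp only [LinearMap.mulLeft_apply] at this
  rw [this]
  congr 1
  simp only [eq_iff_iff]
  constructor
  · intro h; simpa using DFunLike.congr_fun h 1
  · rintro rfl; ext x; simp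

lemma sum_psi_dot {r : ℕ} (d : Fin r → F) :
    ∑ c : Fin r → F, psi p F (∑ i, d i * c i)
      = if d = 0 then ((Fintype.card F : ℂ)) ^ r else 0 := by
  have := sum_psi_linear (p := p) (V := Fin r → F) (dotL F d)
  simp only [dotL_apply] at this
  rw [this]
  simp only [dotL_eq_zero_iff]
  congr 1
  rw [Fintype.card_pi]
  simp

lemma wt_le {n : ℕ} (v : Fin n → F) : wt F v ≤ n := by
  simpa [wt] using (Finset.card_filter_le Finset.univ (fun i => v i ≠ 0)).trans_eq
    (by simp)

lemma card_filter_eq_zero {n : ℕ} (u : Fin n → F) :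
    (Finset.univ.filter fun i => u i = 0).card = n - wt F u := by
  have h := Finset.card_filter_add_card_filter_not
    (s := (Finset.univ : Finset (Fin n))) (p := fun i => u i = 0)
  have h2 : (Finset.univ.filter fun i => ¬ u i = 0).card = wt F u := by
    simp [wt]
  simp only [Finset.card_univ, Fintype.card_fin] at h
  omega

lemma hcoord (a : F) (y : ℂ) :
    ∑ t : F, psi p F (t * a) * (if t ≠ 0 then y else 1)
      = if a = 0 then 1 + ((Fintype.card F : ℂ) - 1) * y else 1 - y := by
  have hsplit : ∀ t : F, psi p F (t * a) * (if t ≠ 0 then y else 1)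
      = psi p F (a * t) * y + (if t = 0 then (1 : ℂ) - y else 0) := by
    intro t
    by_cases h : t = 0
    · simp [h, psi_zero]
    · simp [h, mul_comm]
  rw [Finset.sum_congr rfl fun t _ => hsplit t, Finset.sum_add_distrib,
    ← Finset.sum_mul, sum_psi_mul]
  have : (∑ t : F, if t = 0 then (1 : ℂ) - y else 0) = 1 - y := by simp
  rw [this]
  by_cases h : a = 0 <;> simp [h] <;> ring

lemma sum_char_wt {n : ℕ} (u : Fin n → F) (y : ℂ) :
    ∑ v : Fin n → F, psi p F (∑ i, v i * u i) * y ^ wt F v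
      = (1 + ((Fintype.card F : ℂ) - 1) * y) ^ (n - wt F u) * (1 - y) ^ wt F u := by
  have hterm : ∀ v : Fin n → F, psi p F (∑ i, v i * u i) * y ^ wt F v
      = ∏ i, (psi p F (v i * u i) * (if v i ≠ 0 then y else 1)) := by
    intro v
    rw [Finset.prod_mul_distrib, ← psi_sum]
    congr 1
    rw [Finset.prod_ite, Finset.prod_const, Finset.prod_const_one, mul_one]
    simp [wt]
  rw [Finset.sum_congr rfl fun v _ => hterm v,
    ← Fintype.prod_sum (f := fun (i : Fin n) (t : F) => psi p F (t * u i) * (if t ≠ 0 then y else 1))]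
  rw [Finset.prod_congr rfl fun i _ => hcoord (u i) y]
  rw [Finset.prod_ite, Finset.prod_const, Finset.prod_const, card_filter_eq_zero]
  congr 2

lemma sum_char_wt' {n : ℕ} (u : Fin n → F) {y : ℂ}
    (hy : 1 + ((Fintype.card F : ℂ) - 1) * y ≠ 0) :
    ∑ v : Fin n → F, psi p F (∑ i, v i * u i) * y ^ wt F v
      = (1 + ((Fintype.card F : ℂ) - 1) * y) ^ n
        * ((1 - y) / (1 + ((Fintype.card F : ℂ) - 1) * y)) ^ wt F u := by
  rw [sum_char_wt, div_pow, mul_div_assoc', eq_div_iff (pow_ne_zero _ hy),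
    mul_right_comm, pow_sub_mul_pow _ (wt_le u)]

lemma main_entry {m n k : ℕ}
    (C : Submodule F ((Fin m → F) × (Fin n → F) × (Fin m → F)))
    (hC : Module.finrank F C = m + k) {y : ℂ}
    (hy : 1 + ((Fintype.card F : ℂ) - 1) * y ≠ 0) (w w' : Fin m → F) :
    (FourierMat p F m *
        (((1 + ((Fintype.card F : ℂ) - 1) * y) ^ n / (Fintype.card F : ℂ) ^ k) •
          WAM F (C : Set ((Fin m → F) × (Fin n → F) × (Fin m → F))) 1
            ((1 - y) / (1 + ((Fintype.card F : ℂ) - 1) * y))) *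
        (FourierMat p F m)ᴴ) w w'
      = (Fintype.card F : ℂ) ^ m *
          WAM F (twistedDual F (C : Set ((Fin m → F) × (Fin n → F) × (Fin m → F)))) 1 y w w' := by
  classical
  set T := (Fin m → F) × (Fin n → F) × (Fin m → F) with hT
  set q : ℂ := (Fintype.card F : ℂ) with hqdef
  have hq : q ≠ 0 := Nat.cast_ne_zero.mpr Fintype.card_ne_zero
  set z : ℂ := (1 - y) / (1 + (q - 1) * y) with hzdef
  set c : ℂ := (1 + (q - 1) * y) ^ n / q ^ k with hcdef
  set Fc := FourierMat p F m with hFc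
  set B := c • WAM F (C : Set T) 1 z with hB
  -- the summand over code elements
  set f : T → ℂ := fun t =>
    psi p F (∑ i, w i * t.1 i) * (c * z ^ wt F t.2.1) *
      psi p F (-(∑ i, w' i * t.2.2 i)) with hf
  have hc1 : ∀ u : Fin n → F,
      c * z ^ wt F u = (q ^ k)⁻¹ * ∑ v, psi p F (∑ i, v i * u i) * y ^ wt F v := by
    intro u
    rw [hcdef, div_mul_eq_mul_div, ← sum_char_wt' (p := p) u hy, div_eq_inv_mul]
  have hab : ∀ a b, Fc w a * B a b * (starRingEnd ℂ) (Fc w' b)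
      = ∑ pv, (if (a, pv, b) ∈ C then
          psi p F (∑ i, w i * a i) * (c * z ^ wt F pv) *
            psi p F (-(∑ i, w' i * b i)) else 0) := by
    intro a b
    have h1 : Fc w a = psi p F (∑ i, w i * a i) := rfl
    have h2 : (starRingEnd ℂ) (Fc w' b) = psi p F (-(∑ i, w' i * b i)) := conj_psi _
    rw [h1, h2]
    simp only [hB, Matrix.smul_apply, smul_eq_mul, WAM, one_pow, one_mul,
      Finset.mul_sum, Finset.sum_mul, mul_ite, ite_mul, mul_zero, zero_mul,
      SetLike.mem_coe]
  calc (Fc * B * Fcᴴ) w w'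
      = ∑ b, ∑ a, Fc w a * B a b * (starRingEnd ℂ) (Fc w' b) := by
        simp only [Matrix.mul_apply, Matrix.conjTranspose_apply, Finset.sum_mul, Complex.star_def]
    _ = ∑ a, ∑ b, Fc w a * B a b * (starRingEnd ℂ) (Fc w' b) := Finset.sum_comm
    _ = ∑ a, ∑ b, ∑ pv, (if (a, pv, b) ∈ C then f (a, pv, b) else 0) := by
        exact Finset.sum_congr rfl fun a _ => Finset.sum_congr rfl fun b _ => hab a b
    _ = ∑ a, ∑ pv, ∑ b, (if (a, pv, b) ∈ C then f (a, pv, b) else 0) :=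
        Finset.sum_congr rfl fun a _ => Finset.sum_comm
    _ = ∑ t : T, (if t ∈ C then f t else 0) := by
        rw [Fintype.sum_prod_type]
        exact Finset.sum_congr rfl fun a _ => by rw [Fintype.sum_prod_type]
    _ = ∑ x : C, f ↑x := by
        rw [← Finset.sum_filter]
        exact Finset.sum_subtype _ (fun t => by simp) f
    _ = (q ^ k)⁻¹ * ∑ v : Fin n → F,
          (∑ x : C, psi p F ((∑ i, w i * (x : T).1 i) + (∑ i, v i * (x : T).2.1 i)
            - (∑ i, w' i * (x : T).2.2 i))) * y ^ wt F v := by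
        have hx : ∀ x : C, f ↑x = (q ^ k)⁻¹ *
            ∑ v : Fin n → F, psi p F ((∑ i, w i * (x : T).1 i)
              + (∑ i, v i * (x : T).2.1 i) - (∑ i, w' i * (x : T).2.2 i)) * y ^ wt F v := by
          intro x
          rw [hf]
          simp only []
          rw [hc1 ((x : T).2.1)]
          rw [Finset.mul_sum, Finset.mul_sum, Finset.sum_mul, Finset.mul_sum]
          refine Finset.sum_congr rfl fun v _ => ?_
          rw [sub_eq_add_neg, psi_add, psi_add]
          ring
        rw [Finset.sum_congr rfl fun x _ => hx x, ← Finset.mul_sum]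
        congr 1
        rw [Finset.sum_comm]
        exact Finset.sum_congr rfl fun v _ => (Finset.sum_mul _ _ _).symm
    _ = (q ^ k)⁻¹ * ∑ v : Fin n → F,
          (if (w, v, w') ∈ twistedDual F (C : Set T) then q ^ (m + k) else 0)
            * y ^ wt F v := by
        congr 1
        refine Finset.sum_congr rfl fun v _ => ?_
        congr 1
        -- inner character sum over the code
        set ℓ : C →ₗ[F] F :=
          (dotL F w ∘ₗ LinearMap.fst F _ _
            + dotL F v ∘ₗ (LinearMap.fst F _ _ ∘ₗ LinearMap.snd F _ _)
            - dotL F w' ∘ₗ (LinearMap.snd F _ _ ∘ₗ LinearMap.snd F _ _)) ∘ₗ C.subtype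
          with hℓ
        have happ : ∀ x : C, ℓ x = (∑ i, w i * (x : T).1 i)
            + (∑ i, v i * (x : T).2.1 i) - (∑ i, w' i * (x : T).2.2 i) := by
          intro x
          simp [hℓ, dotL, LinearMap.sub_apply, LinearMap.add_apply]
        have hsum := sum_psi_linear (p := p) ℓ
        have hcard : (Fintype.card C : ℂ) = q ^ (m + k) := by
          rw [Module.card_eq_pow_finrank (K := F) (V := C), hC, hqdef]
          push_cast
          ring
        have hiff : (ℓ = 0) ↔ ((w, v, w') ∈ twistedDual F (C : Set T)) := by
          constructor
          · intro h c hc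
            have := DFunLike.congr_fun h ⟨c, hc⟩
            rw [happ ⟨c, hc⟩] at this
            simpa using this
          · intro h
            ext x
            have := h (x : T) x.2
            rw [happ x]
            simpa using this
        rw [Finset.sum_congr rfl fun x _ => congrArg (psi p F) (happ x).symm, hsum,
          hcard, if_congr hiff rfl rfl]
    _ = q ^ m * WAM F (twistedDual F (C : Set T)) 1 y w w' := by
        simp only [WAM]
        rw [Finset.mul_sum, Finset.mul_sum]
        refine Finset.sum_congr rfl fun v _ => ?_
        split_ifs with h
        · rw [one_pow, pow_add]
          field_simp
        · simp

lemma fourier_mul_conj (m : ℕ) :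
    FourierMat p F m * (FourierMat p F m)ᴴ = ((Fintype.card F : ℂ) ^ m) • 1 := by
  ext a b
  simp only [Matrix.mul_apply, Matrix.conjTranspose_apply, Complex.star_def]
  have hterm : ∀ x : Fin m → F,
      FourierMat p F m a x * (starRingEnd ℂ) (FourierMat p F m b x)
        = psi p F (∑ i, (a - b) i * x i) := by
    intro x
    have h1 : FourierMat p F m a x = psi p F (∑ i, a i * x i) := rfl
    have h2 : (starRingEnd ℂ) (FourierMat p F m b x)
        = psi p F (-(∑ i, b i * x i)) := conj_psi _
    rw [h1, h2, ← psi_add]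
    congr 1
    rw [← Finset.sum_neg_distrib, ← Finset.sum_add_distrib]
    exact Finset.sum_congr rfl fun i _ => by simp [sub_mul]; ring
  rw [Finset.sum_congr rfl fun x _ => hterm x, sum_psi_dot (p := p) (a - b)]
  by_cases h : a = b <;> simp [h, Matrix.one_apply, sub_eq_zero]

lemma fourier_conj_mul (m : ℕ) :
    (FourierMat p F m)ᴴ * FourierMat p F m = ((Fintype.card F : ℂ) ^ m) • 1 := by
  ext a b
  simp only [Matrix.mul_apply, Matrix.conjTranspose_apply, Complex.star_def]
  have hterm : ∀ x : Fin m → F,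
      (starRingEnd ℂ) (FourierMat p F m x a) * FourierMat p F m x b
        = psi p F (∑ i, (b - a) i * x i) := by
    intro x
    have h1 : FourierMat p F m x b = psi p F (∑ i, x i * b i) := rfl
    have h2 : (starRingEnd ℂ) (FourierMat p F m x a)
        = psi p F (-(∑ i, x i * a i)) := conj_psi _
    rw [h1, h2, ← psi_add]
    congr 1
    rw [← Finset.sum_neg_distrib, ← Finset.sum_add_distrib]
    exact Finset.sum_congr rfl fun i _ => by simp [sub_mul]; ring
  rw [Finset.sum_congr rfl fun x _ => hterm x, sum_psi_dot (p := p) (b - a)]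
  by_cases h : a = b <;> simp [h, Matrix.one_apply, sub_eq_zero]
  · exact fun hab => absurd hab.symm h

end Aux11

open Aux11

theorem stmt11 (m n k : ℕ)
    (C : Submodule F ((Fin m → F) × (Fin n → F) × (Fin m → F)))
    (hC : Module.finrank F C = m + k) (y : ℂ)
    (hy : 1 + ((Fintype.card F : ℂ) - 1) * y ≠ 0) :
    (oneSubDM F (WAM F (twistedDual F
        (C : Set ((Fin m → F) × (Fin n → F) × (Fin m → F)))) 1 y))⁻¹
        (0 : Fin m → F) (0 : Fin m → F)
      = ((Fintype.card F : ℂ) ^ m)⁻¹ •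
          (((FourierMat p F m).map (@PowerSeries.C ℂ _) *
            (oneSubDM F
              (((1 + ((Fintype.card F : ℂ) - 1) * y) ^ n / (Fintype.card F : ℂ) ^ k) •
                WAM F (C : Set ((Fin m → F) × (Fin n → F) × (Fin m → F)))
                  1 ((1 - y) / (1 + ((Fintype.card F : ℂ) - 1) * y))))⁻¹ *
            ((FourierMat p F m)ᴴ).map (@PowerSeries.C ℂ _))
            (0 : Fin m → F) (0 : Fin m → F)) := by
  classical
  set q : ℂ := (Fintype.card F : ℂ) with hqdef
  have hq : q ≠ 0 := Nat.cast_ne_zero.mpr Fintype.card_ne_zero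
  have hqm : q ^ m ≠ 0 := pow_ne_zero _ hq
  set A := WAM F (twistedDual F (C : Set ((Fin m → F) × (Fin n → F) × (Fin m → F)))) 1 y
    with hA
  set B := ((1 + (q - 1) * y) ^ n / q ^ k) •
      WAM F (C : Set ((Fin m → F) × (Fin n → F) × (Fin m → F))) 1 ((1 - y) / (1 + (q - 1) * y))
    with hB
  set Fc := FourierMat p F m with hFcdef
  have hmain : Fc * B * Fcᴴ = (q ^ m) • A := by
    ext w w'
    rw [Matrix.smul_apply, smul_eq_mul]
    exact main_entry C hC hy w w'
  have hAF : A * Fc = Fc * B := by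
    have h1 : (q ^ m) • (A * Fc) = (q ^ m) • (Fc * B) := by
      calc (q ^ m) • (A * Fc) = ((q ^ m) • A) * Fc := (Matrix.smul_mul _ _ _).symm
        _ = Fc * B * Fcᴴ * Fc := by rw [hmain]
        _ = Fc * B * (Fcᴴ * Fc) := by rw [Matrix.mul_assoc]
        _ = Fc * B * ((q ^ m) • 1) := by rw [fourier_conj_mul]
        _ = (q ^ m) • (Fc * B) := by rw [Matrix.mul_smul, Matrix.mul_one]
    exact smul_right_injective _ hqm h1
  set Fc' := Fc.map (@PowerSeries.C ℂ _) with hFc'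
  have hFinv : Fc * ((q ^ m)⁻¹ • Fcᴴ) = 1 := by
    rw [Matrix.mul_smul, fourier_mul_conj, smul_smul, inv_mul_cancel₀ hqm, one_smul]
  have hFinv' : Fc' * (((q ^ m)⁻¹ • Fcᴴ).map (@PowerSeries.C ℂ _)) = 1 := by
    rw [hFc', ← Matrix.map_mul, hFinv, Matrix.map_one _ (map_zero _) (map_one _)]
  have hFcinv : Fc'⁻¹ = ((q ^ m)⁻¹ • Fcᴴ).map (@PowerSeries.C ℂ _) :=
    Matrix.inv_eq_right_inv hFinv'
  have hFdet : IsUnit Fc'.det := Matrix.isUnit_det_of_right_inverse hFinv'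
  have hcomm : oneSubDM F A * Fc' = Fc' * oneSubDM F B := by
    unfold oneSubDM
    rw [Matrix.sub_mul, Matrix.mul_sub, Matrix.one_mul, Matrix.mul_one,
      Matrix.smul_mul, Matrix.mul_smul, hFc', ← Matrix.map_mul, ← Matrix.map_mul, hAF]
  have hAeq : oneSubDM F A = Fc' * oneSubDM F B * Fc'⁻¹ := by
    rw [← hcomm, Matrix.mul_assoc, Matrix.mul_nonsing_inv _ hFdet, Matrix.mul_one]
  have hinv : (oneSubDM F A)⁻¹ = Fc' * (oneSubDM F B)⁻¹ * Fc'⁻¹ := by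
    rw [hAeq, Matrix.mul_inv_rev, Matrix.mul_inv_rev,
      Matrix.nonsing_inv_nonsing_inv _ hFdet, ← Matrix.mul_assoc]
  rw [hinv, hFcinv]
  have hsmul : (((q ^ m)⁻¹ • Fcᴴ).map (@PowerSeries.C ℂ _))
      = ((q ^ m)⁻¹ : ℂ) • (Fcᴴ.map (@PowerSeries.C ℂ _)) := by
    ext i j
    simp [Matrix.map_apply, Matrix.smul_apply, smul_eq_mul, _root_.map_mul,
      PowerSeries.smul_eq_C_mul]
  rw [hsmul, Matrix.mul_smul, Matrix.smul_apply]
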